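/- Let P and Q be orthogonal projectors on R^d of equal rank. Then the operator norm of P−Q equals the supremum of ‖(P−Q)θ‖ over unit vectors θ in the image of Q. -/

import Mathlib

open RealInnerProductSpace

section Aux

variable {V : Type*} [NormedAddCommGroup V] [InnerProductSpace ℝ V]

private lemma aux_fix (Q : V →L[ℝ] V) (hQ2 : ∀ x, Q (Q x) = Q x) :
    ∀ θ ∈ LinearMap.range (Q : V →ₗ[ℝ] V), Q θ = θ := by
  intro θ hθ
  obtain ⟨y, rfl⟩ := LinearMap.mem_range.mp hθ
  simpa using hQ2 y

private lemma aux_self_inner (P : V →L[ℝ] V) (hPsymm : ∀ x y, ⟪P x, y⟫ = ⟪x, P y⟫)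
    (hP2 : ∀ x, P (P x) = P x) (y : V) : ⟪P y, y⟫ = ‖P y‖ ^ 2 := by
  have h1 : ⟪P y, P y⟫ = ⟪P y, y⟫ := by
    calc ⟪P y, P y⟫ = ⟪y, P (P y)⟫ := hPsymm y (P y)
      _ = ⟪y, P y⟫ := by rw [hP2]
      _ = ⟪P y, y⟫ := real_inner_comm _ _
  rw [← h1, real_inner_self_eq_norm_sq]

private lemma aux_pyth (Q : V →L[ℝ] V) (hQsymm : ∀ x y, ⟪Q x, y⟫ = ⟪x, Q y⟫)
    (hQ2 : ∀ x, Q (Q x) = Q x) (x : V) : ‖Q x‖ ^ 2 + ‖x - Q x‖ ^ 2 = ‖x‖ ^ 2 := by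
  have hQQ : ⟪Q x, Q x⟫ = ⟪Q x, x⟫ := by
    calc ⟪Q x, Q x⟫ = ⟪x, Q (Q x)⟫ := hQsymm x (Q x)
      _ = ⟪x, Q x⟫ := by rw [hQ2]
      _ = ⟪Q x, x⟫ := real_inner_comm _ _
  have horth : ⟪Q x, x - Q x⟫ = 0 := by rw [inner_sub_right, hQQ, sub_self]
  have h := norm_add_sq_real (Q x) (x - Q x)
  rw [horth] at h
  have hx : Q x + (x - Q x) = x := by abel
  rw [hx] at h
  linarith

private lemma aux_split (P Q : V →L[ℝ] V) (hPsymm : ∀ x y, ⟪P x, y⟫ = ⟪x, P y⟫)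
    (hP2 : ∀ x, P (P x) = P x) (x : V) :
    ‖(P - Q) x‖ ^ 2 = ‖P (x - Q x)‖ ^ 2 + ‖Q x - P (Q x)‖ ^ 2 := by
  have hdecomp : (P - Q) x = P (x - Q x) - (Q x - P (Q x)) := by
    simp only [ContinuousLinearMap.sub_apply, map_sub]
    abel
  have horth : ⟪P (x - Q x), Q x - P (Q x)⟫ = 0 := by
    rw [inner_sub_right]
    have h1 : ⟪P (x - Q x), P (Q x)⟫ = ⟪P (x - Q x), Q x⟫ := by
      rw [← hPsymm, hP2, hPsymm]
    rw [h1, sub_self]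
  rw [hdecomp]
  have h := norm_sub_sq_real (P (x - Q x)) (Q x - P (Q x))
  rw [horth] at h
  linarith

/-- If P is injective on range Q and ranks agree, every element of range P
is the image under P of an element of range Q. -/
private lemma aux_surj [FiniteDimensional ℝ V] (P Q : V →L[ℝ] V)
    (hrank : Module.finrank ℝ (LinearMap.range (P : V →ₗ[ℝ] V))
        = Module.finrank ℝ (LinearMap.range (Q : V →ₗ[ℝ] V)))
    (hinj : ∀ θ ∈ LinearMap.range (Q : V →ₗ[ℝ] V), P θ = 0 → θ = (0 : V))
    (η : V) (hηp : η ∈ LinearMap.range (P : V →ₗ[ℝ] V)) :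
    ∃ θ ∈ LinearMap.range (Q : V →ₗ[ℝ] V), P θ = η := by
  set p := LinearMap.range (P : V →ₗ[ℝ] V) with hpdef
  set q := LinearMap.range (Q : V →ₗ[ℝ] V) with hqdef
  have hmemp : ∀ x : V, P x ∈ p := fun x => LinearMap.mem_range.mpr ⟨x, by simp⟩
  set f : q →ₗ[ℝ] p := LinearMap.codRestrict p
    ((P : V →ₗ[ℝ] V).comp q.subtype) (fun z => hmemp z) with hf
  have hfinj : Function.Injective f := by
    intro z w hzw
    have h1 : P (z : V) = P (w : V) := by
      have := congrArg Subtype.val hzw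
      exact this
    have h2 : P ((z : V) - (w : V)) = 0 := by rw [map_sub, h1, sub_self]
    have h3 : (z : V) - (w : V) = 0 := hinj _ (Submodule.sub_mem q z.2 w.2) h2
    exact Subtype.ext (sub_eq_zero.mp h3)
  have hfsurj : Function.Surjective f :=
    (LinearMap.injective_iff_surjective_of_finrank_eq_finrank hrank.symm).mp hfinj
  obtain ⟨z, hz⟩ := hfsurj ⟨η, hηp⟩
  refine ⟨(z : V), z.2, ?_⟩
  have := congrArg Subtype.val hz
  exact this

/-- The key lemma: for unit η in range P, ‖η - Q η‖ is bounded by any bound S on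
the values ‖(P-Q)θ‖ over unit θ in range Q, using equality of ranks. -/
private lemma aux_boundEta [FiniteDimensional ℝ V] (P Q : V →L[ℝ] V)
    (hPsymm : ∀ x y, ⟪P x, y⟫ = ⟪x, P y⟫) (hP2 : ∀ x, P (P x) = P x)
    (hQsymm : ∀ x y, ⟪Q x, y⟫ = ⟪x, Q y⟫) (hQ2 : ∀ x, Q (Q x) = Q x)
    (hrank : Module.finrank ℝ (LinearMap.range (P : V →ₗ[ℝ] V))
        = Module.finrank ℝ (LinearMap.range (Q : V →ₗ[ℝ] V)))
    (S : ℝ) (hS0 : 0 ≤ S)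
    (hSle : ∀ θ ∈ LinearMap.range (Q : V →ₗ[ℝ] V), ‖θ‖ = 1 → ‖(P - Q) θ‖ ≤ S)
    (η : V) (hηp : η ∈ LinearMap.range (P : V →ₗ[ℝ] V)) (hη1 : ‖η‖ = 1) :
    ‖η - Q η‖ ≤ S := by
  set p := LinearMap.range (P : V →ₗ[ℝ] V) with hpdef
  set q := LinearMap.range (Q : V →ₗ[ℝ] V) with hqdef
  have hmemp : ∀ x : V, P x ∈ p := fun x => LinearMap.mem_range.mpr ⟨x, by simp⟩
  have hpythη : ‖Q η‖ ^ 2 + ‖η - Q η‖ ^ 2 = 1 := by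
    have := aux_pyth Q hQsymm hQ2 η
    rw [hη1] at this
    linarith
  have hunit : ∀ θ : V, θ ∈ q → θ ≠ 0 → (‖θ‖⁻¹ • θ ∈ q ∧ ‖‖θ‖⁻¹ • θ‖ = 1) := by
    intro θ hθ h0
    exact ⟨Submodule.smul_mem _ _ hθ, by
      rw [norm_smul, norm_inv, norm_norm, inv_mul_cancel₀ (norm_ne_zero_iff.mpr h0)]⟩
  by_cases hinj : ∀ θ ∈ q, P θ = 0 → θ = (0 : V)
  · -- injective case: P : q → p is bijective
    obtain ⟨θ, hθq, hPθ⟩ := aux_surj P Q hrank hinj η hηp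
    have hθ0 : θ ≠ 0 := by
      intro h
      have hη0 : η = 0 := by rw [← hPθ, h, map_zero]
      rw [hη0, norm_zero] at hη1
      exact one_ne_zero hη1.symm
    have hnθ : 0 < ‖θ‖ := norm_pos_iff.mpr hθ0
    have hinner1 : ⟪η, θ⟫ = 1 := by
      rw [← hPθ, aux_self_inner P hPsymm hP2 θ, hPθ, hη1]
      norm_num
    have hinner2 : ⟪Q η, θ⟫ = 1 := by
      rw [hQsymm, aux_fix Q hQ2 θ hθq, hinner1]
    have hQηlb : 1 ≤ ‖Q η‖ * ‖θ‖ := by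
      calc (1 : ℝ) = ⟪Q η, θ⟫ := hinner2.symm
        _ ≤ ‖Q η‖ * ‖θ‖ := real_inner_le_norm _ _
    obtain ⟨hu1, hu2⟩ := hunit θ hθq hθ0
    have hwit := hSle _ hu1 hu2
    have happ : (P - Q) (‖θ‖⁻¹ • θ) = ‖θ‖⁻¹ • (P θ - θ) := by
      simp only [ContinuousLinearMap.sub_apply, map_smul, aux_fix Q hQ2 θ hθq, ← smul_sub]
    have hwitsq : ‖(P - Q) (‖θ‖⁻¹ • θ)‖ ^ 2 = 1 - (‖θ‖⁻¹) ^ 2 := by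
      rw [happ, norm_smul, norm_inv, norm_norm, mul_pow]
      have hPθθ : ‖P θ - θ‖ ^ 2 = ‖θ‖ ^ 2 - ‖P θ‖ ^ 2 := by
        have h := norm_sub_sq_real (P θ) θ
        rw [aux_self_inner P hPsymm hP2 θ] at h
        rw [h]
        ring
      rw [hPθθ, hPθ, hη1]
      field_simp
    have h2 : (‖θ‖⁻¹) ^ 2 ≤ ‖Q η‖ ^ 2 := by
      have hQη0 : 0 ≤ ‖Q η‖ := norm_nonneg _
      have hle : ‖θ‖⁻¹ ≤ ‖Q η‖ := by
        rw [inv_eq_one_div, div_le_iff₀ hnθ]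
        linarith
      have hinv : (0:ℝ) < ‖θ‖⁻¹ := inv_pos.mpr hnθ
      nlinarith
    have h3 : ‖(P - Q) (‖θ‖⁻¹ • θ)‖ ^ 2 ≤ S ^ 2 := by
      have := norm_nonneg ((P - Q) (‖θ‖⁻¹ • θ))
      nlinarith
    rw [hwitsq] at h3
    have hfinal : ‖η - Q η‖ ^ 2 ≤ S ^ 2 := by linarith
    have := norm_nonneg (η - Q η)
    nlinarith
  · -- non-injective case: S ≥ 1
    push_neg at hinj
    obtain ⟨θ, hθq, hPθ0, hθ0⟩ := hinj
    obtain ⟨hu1, hu2⟩ := hunit θ hθq hθ0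
    have hwit := hSle _ hu1 hu2
    have happ : (P - Q) (‖θ‖⁻¹ • θ) = -(‖θ‖⁻¹ • θ) := by
      simp only [ContinuousLinearMap.sub_apply, map_smul, aux_fix Q hQ2 θ hθq, hPθ0, smul_zero,
        zero_sub, smul_neg]
    rw [happ, norm_neg, hu2] at hwit
    have h1 : ‖η - Q η‖ ^ 2 ≤ 1 := by nlinarith [sq_nonneg ‖Q η‖]
    have := norm_nonneg (η - Q η)
    nlinarith

private lemma aux_bound1 [FiniteDimensional ℝ V] (P Q : V →L[ℝ] V)
    (hPsymm : ∀ x y, ⟪P x, y⟫ = ⟪x, P y⟫) (hP2 : ∀ x, P (P x) = P x)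
    (hQsymm : ∀ x y, ⟪Q x, y⟫ = ⟪x, Q y⟫) (hQ2 : ∀ x, Q (Q x) = Q x)
    (hrank : Module.finrank ℝ (LinearMap.range (P : V →ₗ[ℝ] V))
        = Module.finrank ℝ (LinearMap.range (Q : V →ₗ[ℝ] V)))
    (S : ℝ) (hS0 : 0 ≤ S)
    (hSle : ∀ θ ∈ LinearMap.range (Q : V →ₗ[ℝ] V), ‖θ‖ = 1 → ‖(P - Q) θ‖ ≤ S)
    (x : V) : ‖P (x - Q x)‖ ≤ S * ‖x - Q x‖ := by
  set y := x - Q x with hy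
  have hQy : Q y = 0 := by rw [hy, map_sub, hQ2, sub_self]
  by_cases h0 : P y = 0
  · rw [h0, norm_zero]
    positivity
  · have hn : 0 < ‖P y‖ := norm_pos_iff.mpr h0
    set η : V := ‖P y‖⁻¹ • P y with hη
    have hηp : η ∈ LinearMap.range (P : V →ₗ[ℝ] V) :=
      Submodule.smul_mem _ _ (LinearMap.mem_range.mpr ⟨y, by simp⟩)
    have hη1 : ‖η‖ = 1 := by
      rw [hη, norm_smul, norm_inv, norm_norm, inv_mul_cancel₀ (ne_of_gt hn)]
    have hbE := aux_boundEta P Q hPsymm hP2 hQsymm hQ2 hrank S hS0 hSle η hηp hη1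
    have hkey : ⟪η - Q η, y⟫ = ‖P y‖ := by
      rw [inner_sub_left]
      have h1 : ⟪Q η, y⟫ = 0 := by rw [hQsymm, hQy, inner_zero_right]
      have h2 : ⟪η, y⟫ = ‖P y‖ := by
        rw [hη, real_inner_smul_left, aux_self_inner P hPsymm hP2 y]
        field_simp
      rw [h1, h2, sub_zero]
    have hcs : ⟪η - Q η, y⟫ ≤ ‖η - Q η‖ * ‖y‖ := real_inner_le_norm _ _
    rw [hkey] at hcs
    calc ‖P y‖ ≤ ‖η - Q η‖ * ‖y‖ := hcs
      _ ≤ S * ‖y‖ := mul_le_mul_of_nonneg_right hbE (norm_nonneg _)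

private lemma aux_opnorm_le [FiniteDimensional ℝ V] (P Q : V →L[ℝ] V)
    (hPsymm : ∀ x y, ⟪P x, y⟫ = ⟪x, P y⟫) (hP2 : ∀ x, P (P x) = P x)
    (hQsymm : ∀ x y, ⟪Q x, y⟫ = ⟪x, Q y⟫) (hQ2 : ∀ x, Q (Q x) = Q x)
    (hrank : Module.finrank ℝ (LinearMap.range (P : V →ₗ[ℝ] V))
        = Module.finrank ℝ (LinearMap.range (Q : V →ₗ[ℝ] V)))
    (S : ℝ) (hS0 : 0 ≤ S)
    (hSle : ∀ θ ∈ LinearMap.range (Q : V →ₗ[ℝ] V), ‖θ‖ = 1 → ‖(P - Q) θ‖ ≤ S) :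
    ‖P - Q‖ ≤ S := by
  apply ContinuousLinearMap.opNorm_le_bound _ hS0
  intro x
  have hbound2 : ‖Q x - P (Q x)‖ ≤ S * ‖Q x‖ := by
    by_cases h0 : Q x = 0
    · simp [h0]
    · have hn : 0 < ‖Q x‖ := norm_pos_iff.mpr h0
      have hq1 : ‖Q x‖⁻¹ • Q x ∈ LinearMap.range (Q : V →ₗ[ℝ] V) :=
        Submodule.smul_mem _ _ (LinearMap.mem_range.mpr ⟨x, by simp⟩)
      have hq2 : ‖‖Q x‖⁻¹ • Q x‖ = 1 := by
        rw [norm_smul, norm_inv, norm_norm, inv_mul_cancel₀ (ne_of_gt hn)]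
      have hwit := hSle _ hq1 hq2
      have happ : (P - Q) (‖Q x‖⁻¹ • Q x) = ‖Q x‖⁻¹ • (P (Q x) - Q x) := by
        simp only [ContinuousLinearMap.sub_apply, map_smul, hQ2, ← smul_sub]
      rw [happ, norm_smul, norm_inv, norm_norm] at hwit
      have h1 : ‖P (Q x) - Q x‖ ≤ S * ‖Q x‖ := by
        rw [inv_mul_le_iff₀ hn] at hwit
        linarith
      calc ‖Q x - P (Q x)‖ = ‖P (Q x) - Q x‖ := norm_sub_rev _ _
        _ ≤ S * ‖Q x‖ := h1
  have h1 := aux_split P Q hPsymm hP2 x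
  have h2 := aux_bound1 P Q hPsymm hP2 hQsymm hQ2 hrank S hS0 hSle x
  have h4 := aux_pyth Q hQsymm hQ2 x
  have h5 : ‖(P - Q) x‖ ^ 2 ≤ (S * ‖x‖) ^ 2 := by
    have ha := pow_le_pow_left₀ (norm_nonneg (P (x - Q x))) h2 2
    have hb := pow_le_pow_left₀ (norm_nonneg (Q x - P (Q x))) hbound2 2
    calc ‖(P - Q) x‖ ^ 2 = ‖P (x - Q x)‖ ^ 2 + ‖Q x - P (Q x)‖ ^ 2 := h1
      _ ≤ (S * ‖x - Q x‖) ^ 2 + (S * ‖Q x‖) ^ 2 := add_le_add ha hb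
      _ = S ^ 2 * (‖Q x‖ ^ 2 + ‖x - Q x‖ ^ 2) := by ring
      _ = S ^ 2 * ‖x‖ ^ 2 := by rw [h4]
      _ = (S * ‖x‖) ^ 2 := by ring
  exact (pow_le_pow_iff_left₀ (norm_nonneg _)
    (mul_nonneg hS0 (norm_nonneg x)) two_ne_zero).mp h5

end Aux

theorem stmt_9 (d : ℕ) (P Q : EuclideanSpace ℝ (Fin d) →L[ℝ] EuclideanSpace ℝ (Fin d))
    (hPsymm : ∀ x y, ⟪P x, y⟫ = ⟪x, P y⟫) (hPidem : P.comp P = P)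
    (hQsymm : ∀ x y, ⟪Q x, y⟫ = ⟪x, Q y⟫) (hQidem : Q.comp Q = Q)
    (hrank : Module.finrank ℝ (LinearMap.range (P : EuclideanSpace ℝ (Fin d) →ₗ[ℝ] EuclideanSpace ℝ (Fin d)))
        = Module.finrank ℝ (LinearMap.range (Q : EuclideanSpace ℝ (Fin d) →ₗ[ℝ] EuclideanSpace ℝ (Fin d)))) :
    ‖P - Q‖ = sSup ((fun θ => ‖(P - Q) θ‖) ''
      {θ : EuclideanSpace ℝ (Fin d) | θ ∈ LinearMap.range (Q : EuclideanSpace ℝ (Fin d) →ₗ[ℝ] EuclideanSpace ℝ (Fin d)) ∧ ‖θ‖ = 1}) := by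
  classical
  set V := EuclideanSpace ℝ (Fin d) with hV
  have hP2 : ∀ x : V, P (P x) = P x := fun x => by
    have := DFunLike.congr_fun hPidem x
    simpa using this
  have hQ2 : ∀ x : V, Q (Q x) = Q x := fun x => by
    have := DFunLike.congr_fun hQidem x
    simpa using this
  by_cases htriv : ∀ θ ∈ LinearMap.range (Q : V →ₗ[ℝ] V), θ = (0 : V)
  · have hqbot : LinearMap.range (Q : V →ₗ[ℝ] V) = ⊥ := by
      rw [Submodule.eq_bot_iff]; exact htriv
    have hpbot : LinearMap.range (P : V →ₗ[ℝ] V) = ⊥ := by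
      have h0 : Module.finrank ℝ (LinearMap.range (P : V →ₗ[ℝ] V)) = 0 := by
        rw [hrank, hqbot]; simp
      exact Submodule.finrank_eq_zero.mp h0
    have hPQ0 : P - Q = 0 := by
      ext x
      have h1 : P x = 0 := by
        have : P x ∈ LinearMap.range (P : V →ₗ[ℝ] V) := LinearMap.mem_range.mpr ⟨x, by simp⟩
        rw [hpbot] at this; simpa using this
      have h2 : Q x = 0 := by
        have : Q x ∈ LinearMap.range (Q : V →ₗ[ℝ] V) := LinearMap.mem_range.mpr ⟨x, by simp⟩
        rw [hqbot] at this; simpa using this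
      simp [h1, h2]
    have hse : ((fun θ => ‖(P - Q) θ‖) ''
        {θ : V | θ ∈ LinearMap.range (Q : V →ₗ[ℝ] V) ∧ ‖θ‖ = 1}) = (∅ : Set ℝ) := by
      rw [Set.image_eq_empty]
      ext θ
      simp only [Set.mem_setOf_eq, Set.mem_empty_iff_false, iff_false]
      rintro ⟨hθ, hθ1⟩
      have := htriv θ hθ
      rw [this, norm_zero] at hθ1
      exact one_ne_zero hθ1.symm
    rw [hse, Real.sSup_empty, hPQ0, norm_zero]
  · push_neg at htriv
    obtain ⟨θ₀, hθ₀q, hθ₀0⟩ := htriv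
    set s : Set ℝ := ((fun θ => ‖(P - Q) θ‖) ''
        {θ : V | θ ∈ LinearMap.range (Q : V →ₗ[ℝ] V) ∧ ‖θ‖ = 1}) with hs
    have hsne : s.Nonempty := by
      refine ⟨‖(P - Q) (‖θ₀‖⁻¹ • θ₀)‖, ⟨‖θ₀‖⁻¹ • θ₀, ⟨?_, ?_⟩, rfl⟩⟩
      · exact Submodule.smul_mem _ _ hθ₀q
      · rw [norm_smul, norm_inv, norm_norm, inv_mul_cancel₀ (norm_ne_zero_iff.mpr hθ₀0)]
    have hbdd : BddAbove s := by
      refine ⟨‖P - Q‖, ?_⟩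
      rintro r ⟨θ, ⟨hθq, hθ1⟩, rfl⟩
      calc ‖(P - Q) θ‖ ≤ ‖P - Q‖ * ‖θ‖ := (P - Q).le_opNorm θ
        _ = ‖P - Q‖ := by rw [hθ1, mul_one]
    have hmem_le : ∀ θ ∈ LinearMap.range (Q : V →ₗ[ℝ] V), ‖θ‖ = 1 →
        ‖(P - Q) θ‖ ≤ sSup s :=
      fun θ hθq hθ1 => le_csSup hbdd ⟨θ, ⟨hθq, hθ1⟩, rfl⟩
    have hS0 : 0 ≤ sSup s := by
      obtain ⟨r, ⟨θ, ⟨hθq, hθ1⟩, rfl⟩⟩ := hsne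
      exact le_trans (norm_nonneg _) (hmem_le θ hθq hθ1)
    have hle1 : sSup s ≤ ‖P - Q‖ := by
      apply csSup_le hsne
      rintro r ⟨θ, ⟨hθq, hθ1⟩, rfl⟩
      calc ‖(P - Q) θ‖ ≤ ‖P - Q‖ * ‖θ‖ := (P - Q).le_opNorm θ
        _ = ‖P - Q‖ := by rw [hθ1, mul_one]
    have hle2 : ‖P - Q‖ ≤ sSup s :=
      aux_opnorm_le P Q hPsymm hP2 hQsymm hQ2 hrank (sSup s) hS0 hmem_le
    exact le_antisymm hle2 hle1
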